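/- Let m ≥ 1 be an integer, N = 2^m, and let M be the SAFFRON matrix. Then for every set S of column indices (possibly empty), the Hamming weight of ⋁_{j∈S} M_j equals m if and only if |S| = 1. Moreover, if |S| ≥ 2 then the Hamming weight of ⋁_{j∈S} M_j is strictly greater than m, and if S = ∅ it is 0. -/

import Mathlib

/-- The SAFFRON matrix for `N = 2 ^ m`: rows indexed by `Fin (2 * m)`, columns by
`Fin (2 ^ m)`; row `i < m` is the `i`-th bit of the column index, row `m ≤ i < 2m`
is the complement of the `(i - m)`-th bit. -/
def saffron (m : ℕ) (i : Fin (2 * m)) (j : Fin (2 ^ m)) : Bool :=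
  if (i : ℕ) < m then Nat.testBit (j : ℕ) (i : ℕ) else !Nat.testBit (j : ℕ) ((i : ℕ) - m)

/-- For any set `S` of columns of the SAFFRON matrix, the Hamming weight
of `⋁_{j ∈ S} M_j` equals `m` iff `|S| = 1`; if `|S| ≥ 2` the weight exceeds `m`; and
if `S = ∅` the weight is `0`. -/
theorem saffron_union_weight_eq_iff (m : ℕ) (hm : 1 ≤ m) (S : Finset (Fin (2 ^ m))) :
    ((Finset.univ.filter (fun i : Fin (2 * m) => ∃ j ∈ S, saffron m i j = true)).card = m
        ↔ S.card = 1) ∧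
    (2 ≤ S.card →
      m < (Finset.univ.filter (fun i : Fin (2 * m) => ∃ j ∈ S, saffron m i j = true)).card) ∧
    (S = ∅ →
      (Finset.univ.filter (fun i : Fin (2 * m) => ∃ j ∈ S, saffron m i j = true)).card = 0) := by
  classical
  have hmpos : 0 < m := hm
  set T := Finset.univ.filter (fun i : Fin (2 * m) => ∃ j ∈ S, saffron m i j = true) with hTdef
  set q : Fin (2 * m) → Fin m := fun i => ⟨(i : ℕ) % m, Nat.mod_lt _ hmpos⟩ with hq
  have hsum : T.card = ∑ b : Fin m, (T.filter (fun i => q i = b)).card :=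
    Finset.card_eq_sum_card_fiberwise (fun i _ => Finset.mem_univ _)
  have hb1lt : ∀ b : Fin m, (b : ℕ) < 2 * m := fun b => by have := b.2; omega
  have hb2lt : ∀ b : Fin m, (b : ℕ) + m < 2 * m := fun b => by have := b.2; omega
  set i1 : Fin m → Fin (2 * m) := fun b => ⟨(b : ℕ), hb1lt b⟩ with hi1
  set i2 : Fin m → Fin (2 * m) := fun b => ⟨(b : ℕ) + m, hb2lt b⟩ with hi2
  have hne : ∀ b, i1 b ≠ i2 b := by
    intro b h
    have := congrArg Fin.val h
    simp only [hi1, hi2] at this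
    omega
  -- membership characterizations
  have hmem1 : ∀ b : Fin m, i1 b ∈ T.filter (fun i => q i = b) ↔
      ∃ j ∈ S, Nat.testBit (j : ℕ) (b : ℕ) = true := by
    intro b
    rw [Finset.mem_filter, hTdef, Finset.mem_filter]
    simp only [Finset.mem_filter, hTdef, Finset.mem_univ, true_and, hq, hi1, saffron]
    constructor
    · rintro ⟨⟨j, hj, hsaf⟩, _⟩
      rw [if_pos b.2] at hsaf
      exact ⟨j, hj, hsaf⟩
    · rintro ⟨j, hj, hbit⟩
      refine ⟨⟨j, hj, ?_⟩, ?_⟩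
      · rw [if_pos b.2]; exact hbit
      · exact Fin.ext (Nat.mod_eq_of_lt b.2)
  have hmem2 : ∀ b : Fin m, i2 b ∈ T.filter (fun i => q i = b) ↔
      ∃ j ∈ S, Nat.testBit (j : ℕ) (b : ℕ) = false := by
    intro b
    have hnotlt : ¬ ((b : ℕ) + m < m) := by omega
    have hsub : (b : ℕ) + m - m = (b : ℕ) := by omega
    rw [Finset.mem_filter, hTdef, Finset.mem_filter]
    simp only [Finset.mem_filter, hTdef, Finset.mem_univ, true_and, hq, hi2, saffron]
    constructor
    · rintro ⟨⟨j, hj, hsaf⟩, _⟩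
      rw [if_neg hnotlt, hsub] at hsaf
      exact ⟨j, hj, by simpa using hsaf⟩
    · rintro ⟨j, hj, hbit⟩
      refine ⟨⟨j, hj, ?_⟩, ?_⟩
      · rw [if_neg hnotlt, hsub, hbit]; rfl
      · exact Fin.ext (by simp [Nat.add_mod, Nat.mod_eq_of_lt b.2])
  -- fibers are contained in the pair
  have hfib_sub : ∀ b : Fin m, T.filter (fun i => q i = b) ⊆ {i1 b, i2 b} := by
    intro b i hi
    simp only [Finset.mem_filter] at hi
    have h1 : (i : ℕ) % m = (b : ℕ) := congrArg Fin.val hi.2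
    have h2 : (i : ℕ) < 2 * m := i.2
    have hdm := Nat.div_add_mod (i : ℕ) m
    have hdiv : (i : ℕ) / m < 2 := Nat.div_lt_of_lt_mul (by omega)
    have hcase : (i : ℕ) / m = 0 ∨ (i : ℕ) / m = 1 := by
      generalize (i : ℕ) / m = d at hdiv
      omega
    simp only [Finset.mem_insert, Finset.mem_singleton]
    have hval : (i : ℕ) = (b : ℕ) ∨ (i : ℕ) = (b : ℕ) + m := by
      rcases hcase with hc | hc <;> rw [hc] at hdm <;> omega
    rcases hval with h | h
    · left; exact Fin.ext h
    · right; exact Fin.ext h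
  have hfib_le2 : ∀ b : Fin m, (T.filter (fun i => q i = b)).card ≤ 2 := by
    intro b
    calc (T.filter (fun i => q i = b)).card ≤ ({i1 b, i2 b} : Finset _).card :=
          Finset.card_le_card (hfib_sub b)
      _ ≤ 2 := Finset.card_insert_le _ _ |>.trans (by simp)
  -- lower bound 1 per fiber when S nonempty
  have hfib_ge1 : ∀ j₀ ∈ S, ∀ b : Fin m, 1 ≤ (T.filter (fun i => q i = b)).card := by
    intro j₀ hj₀ b
    apply Finset.card_pos.2
    cases h : Nat.testBit (j₀ : ℕ) (b : ℕ) with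
    | true => exact ⟨i1 b, (hmem1 b).2 ⟨j₀, hj₀, h⟩⟩
    | false => exact ⟨i2 b, (hmem2 b).2 ⟨j₀, hj₀, h⟩⟩
  -- singleton case: each fiber has exactly one element
  have hsingle : ∀ j : Fin (2 ^ m), S = {j} → T.card = m := by
    intro j hS
    subst hS
    rw [hsum]
    have : ∀ b : Fin m, (T.filter (fun i => q i = b)).card = 1 := by
      intro b
      refine le_antisymm ?_ (hfib_ge1 j (Finset.mem_singleton_self j) b)
      apply Finset.card_le_one.2
      intro a ha a' ha'
      have key : ∀ c ∈ T.filter (fun i => q i = b), c = i1 b ∨ c = i2 b := by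
        intro c hc
        have := hfib_sub b hc
        simpa [Finset.mem_insert, Finset.mem_singleton] using this
      have hnot12 : ¬ (i1 b ∈ T.filter (fun i => q i = b) ∧ i2 b ∈ T.filter (fun i => q i = b)) := by
        rintro ⟨h1, h2⟩
        obtain ⟨j1, hj1, hb1⟩ := (hmem1 b).1 h1
        obtain ⟨j2, hj2, hb2⟩ := (hmem2 b).1 h2
        rw [Finset.mem_singleton] at hj1 hj2
        subst hj1; subst hj2
        rw [hb1] at hb2; exact absurd hb2 (by simp)
      rcases key a ha with h | h <;> rcases key a' ha' with h' | h'
      · rw [h, h']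
      · exact absurd ⟨h ▸ ha, h' ▸ ha'⟩ hnot12
      · exact absurd ⟨h' ▸ ha', h ▸ ha⟩ hnot12
      · rw [h, h']
    simp [this]
  -- two-column case
  have htwo : 2 ≤ S.card → m < T.card := by
    intro h2
    obtain ⟨j, hj, k, hk, hjk⟩ := Finset.one_lt_card.mp h2
    have hvne : (j : ℕ) ≠ (k : ℕ) := fun h => hjk (Fin.ext h)
    have : ¬ ∀ b, Nat.testBit (j : ℕ) b = Nat.testBit (k : ℕ) b := fun h =>
      hvne (Nat.eq_of_testBit_eq h)
    push_neg at this
    obtain ⟨b, hbne⟩ := this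
    have hblt : b < m := by
      by_contra hge
      push_neg at hge
      have h1 : Nat.testBit (j : ℕ) b = false :=
        Nat.testBit_eq_false_of_lt (lt_of_lt_of_le j.2 (Nat.pow_le_pow_right (by norm_num) hge))
      have h2 : Nat.testBit (k : ℕ) b = false :=
        Nat.testBit_eq_false_of_lt (lt_of_lt_of_le k.2 (Nat.pow_le_pow_right (by norm_num) hge))
      rw [h1, h2] at hbne; exact hbne rfl
    set b' : Fin m := ⟨b, hblt⟩ with hb'
    have hfib2 : 2 ≤ (T.filter (fun i => q i = b')).card := by
      have hboth : i1 b' ∈ T.filter (fun i => q i = b') ∧ i2 b' ∈ T.filter (fun i => q i = b') := by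
        cases hjb : Nat.testBit (j : ℕ) b with
        | true =>
          have hkb : Nat.testBit (k : ℕ) b = false := by
            cases hkb : Nat.testBit (k : ℕ) b
            · rfl
            · rw [hjb, hkb] at hbne; exact absurd rfl hbne
          exact ⟨(hmem1 b').2 ⟨j, hj, hjb⟩, (hmem2 b').2 ⟨k, hk, hkb⟩⟩
        | false =>
          have hkb : Nat.testBit (k : ℕ) b = true := by
            cases hkb : Nat.testBit (k : ℕ) b
            · rw [hjb, hkb] at hbne; exact absurd rfl hbne
            · rfl
          exact ⟨(hmem1 b').2 ⟨k, hk, hkb⟩, (hmem2 b').2 ⟨j, hj, hjb⟩⟩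
      have hsub2 : ({i1 b', i2 b'} : Finset _) ⊆ T.filter (fun i => q i = b') := by
        intro x hx
        rcases Finset.mem_insert.1 hx with h | h
        · exact h ▸ hboth.1
        · exact (Finset.mem_singleton.1 h) ▸ hboth.2
      calc 2 = ({i1 b', i2 b'} : Finset _).card := (Finset.card_pair (hne b')).symm
        _ ≤ _ := Finset.card_le_card hsub2
    have : (∑ b : Fin m, 1) < ∑ b : Fin m, (T.filter (fun i => q i = b)).card := by
      apply Finset.sum_lt_sum
      · intro b _; exact hfib_ge1 j hj b
      · exact ⟨b', Finset.mem_univ _, by omega⟩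
    rw [hsum]
    simpa using this
  -- empty case
  have hempty : S = ∅ → T.card = 0 := by
    intro hS
    subst hS
    rw [Finset.card_eq_zero]
    apply Finset.eq_empty_of_forall_notMem
    intro i hi
    simp only [hTdef, Finset.mem_filter] at hi
    obtain ⟨_, j, hj, _⟩ := hi
    exact absurd hj (Finset.notMem_empty j)
  refine ⟨⟨fun hcard => ?_, fun h1 => ?_⟩, htwo, hempty⟩
  · by_contra hne1
    rcases Nat.lt_or_ge S.card 1 with h | h
    · have : S = ∅ := Finset.card_eq_zero.1 (by omega)
      have := hempty this
      omega
    · have h2 : 2 ≤ S.card := by omega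
      have := htwo h2
      omega
  · obtain ⟨j, hj⟩ := Finset.card_eq_one.1 h1
    exact hsingle j hj
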